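/- arXiv:1108.5957 — 4 statements merged into one kernel-verified Lean document; each statement's English description precedes it below -/
import Mathlib

section
/- Let Ψ : A ⊗[k] B → B ⊗[k] A be any k-linear map (not assumed to be a weak distributive law). Then the weak unitality condition — (μ_B ⊗ id_A)(b ⊗ Ψ(a ⊗ 1_B)) = (id_B ⊗ μ_A)(Ψ(1_A ⊗ b) ⊗ a) for all a ∈ A, b ∈ B — holds if and only if both of the following hold: (i) Ψ(1_A ⊗ b) = (μ_B ⊗ id_A)(b ⊗ Ψ(1_A ⊗ 1_B)) for all b ∈ B, and (ii) Ψ(a ⊗ 1_B) = (id_B ⊗ μ_A)(Ψ(1_A ⊗ 1_B) ⊗ a) for all a ∈ A. -/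
open TensorProduct LinearMap

noncomputable section

/-- For any `k`-linear map `Ψ : A ⊗ B → B ⊗ A`, the weak unitality condition
`(μ_B ⊗ id_A)(b ⊗ Ψ(a ⊗ 1)) = (id_B ⊗ μ_A)(Ψ(1 ⊗ b) ⊗ a)` holds iff
both `Ψ(1 ⊗ b) = (μ_B ⊗ id_A)(b ⊗ Ψ(1 ⊗ 1))` and
`Ψ(a ⊗ 1) = (id_B ⊗ μ_A)(Ψ(1 ⊗ 1) ⊗ a)` hold. -/
theorem weak_unitality_iff (k : Type*) [CommRing k]
    (A B : Type*) [Ring A] [Algebra k A] [Ring B] [Algebra k B]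
    (Ψ : A ⊗[k] B →ₗ[k] B ⊗[k] A) :
    (∀ (a : A) (b : B),
        rTensor A (mulLeft k b) (Ψ (a ⊗ₜ[k] (1 : B))) =
          lTensor B (mulRight k a) (Ψ ((1 : A) ⊗ₜ[k] b))) ↔
      ((∀ b : B,
          Ψ ((1 : A) ⊗ₜ[k] b) =
            rTensor A (mulLeft k b) (Ψ ((1 : A) ⊗ₜ[k] (1 : B)))) ∧
       (∀ a : A,
          Ψ (a ⊗ₜ[k] (1 : B)) =
            lTensor B (mulRight k a) (Ψ ((1 : A) ⊗ₜ[k] (1 : B))))) := by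
  constructor
  · intro h
    constructor
    · intro b
      have := h 1 b
      simpa [LinearMap.mulRight_one] using this.symm
    · intro a
      have := h a 1
      simpa [LinearMap.mulLeft_one] using this
  · rintro ⟨h1, h2⟩ a b
    rw [h2 a, h1 b]
    induction Ψ ((1 : A) ⊗ₜ[k] (1 : B)) using TensorProduct.induction_on with
    | zero => simp
    | tmul x y => simp
    | add u v hu hv => simp [hu, hv]
end
end

section
/- Let R be a commutative k-algebra with a separable Frobenius structure given by ψ : R → k and (eᵢ, fᵢ), i = 1, …, n. Then for every R-module M and every R-module N, there is a (necessarily unique) k-linear map ι : M ⊗[R] N → M ⊗[k] N satisfying ι(m ⊗[R] n) = Σᵢ (eᵢ • m) ⊗[k] (fᵢ • n) for all m ∈ M, n ∈ N, and it is a section of the canonical projection π : M ⊗[k] N → M ⊗[R] N, m ⊗[k] n ↦ m ⊗[R] n, i.e. π ∘ ι = id. -/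
open TensorProduct LinearMap

noncomputable section

variable (k : Type*) [CommRing k] (R : Type*) [CommRing R] [Algebra k R]
variable (M N : Type*) [AddCommGroup M] [Module k M] [Module R M] [IsScalarTower k R M]
  [AddCommGroup N] [Module k N] [Module R N] [IsScalarTower k R N]

/-- The canonical projection `π : M ⊗[k] N → M ⊗[R] N`, `m ⊗[k] n ↦ m ⊗[R] n`. -/
def canProj : M ⊗[k] N →ₗ[k] M ⊗[R] N :=
  TensorProduct.lift
    (LinearMap.mk₂ k (fun m n => m ⊗ₜ[R] n)
      (fun m₁ m₂ n => TensorProduct.add_tmul m₁ m₂ n)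
      (fun c m n => (TensorProduct.smul_tmul' c m n).symm)
      (fun m n₁ n₂ => TensorProduct.tmul_add m n₁ n₂)
      (fun c m n => by
        show m ⊗ₜ[R] (c • n) = c • (m ⊗ₜ[R] n)
        rw [← IsScalarTower.algebraMap_smul R c n, ← TensorProduct.smul_tmul,
          IsScalarTower.algebraMap_smul, TensorProduct.smul_tmul']))

/-- If the commutative `k`-algebra `R` has a separable Frobenius structure
`(ψ, (eᵢ, fᵢ))`, then for all `R`-modules `M`, `N` there is a unique `k`-linear map
`ι : M ⊗[R] N → M ⊗[k] N` with `ι(m ⊗ n) = Σᵢ (eᵢ • m) ⊗ (fᵢ • n)`, and it is a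
section of the canonical projection `π : M ⊗[k] N → M ⊗[R] N`. -/
theorem frobenius_section_exists_unique
    (n : ℕ) (e f : Fin n → R) (ψ : R →ₗ[k] k)
    (hfrob₁ : ∀ r : R, ∑ i, ψ (r * e i) • f i = r)
    (hfrob₂ : ∀ r : R, ∑ i, ψ (f i * r) • e i = r)
    (hsep : ∑ i, e i * f i = 1) :
    ∃ ι : M ⊗[R] N →ₗ[k] M ⊗[k] N,
      (∀ (m : M) (x : N), ι (m ⊗ₜ[R] x) = ∑ i, (e i • m) ⊗ₜ[k] (f i • x)) ∧
      canProj k R M N ∘ₗ ι = LinearMap.id ∧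
      ∀ ι' : M ⊗[R] N →ₗ[k] M ⊗[k] N,
        (∀ (m : M) (x : N), ι' (m ⊗ₜ[R] x) = ∑ i, (e i • m) ⊗ₜ[k] (f i • x)) → ι' = ι := by
  -- the balanced bi-additive map
  set b : M →+ N →+ (M ⊗[k] N) :=
    { toFun := fun m =>
        { toFun := fun x => ∑ i, (e i • m) ⊗ₜ[k] (f i • x)
          map_zero' := by simp
          map_add' := by intro x y; simp [smul_add, tmul_add, Finset.sum_add_distrib] }
      map_zero' := by ext x; simp
      map_add' := by intro m m'; ext x; simp [smul_add, add_tmul, Finset.sum_add_distrib] }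
    with hb
  have hbal : ∀ (r : R) (m : M) (x : N), b (r • m) x = b m (r • x) := by
    intro r m x
    show ∑ i, (e i • r • m) ⊗ₜ[k] (f i • x) = ∑ i, (e i • m) ⊗ₜ[k] (f i • r • x)
    have key : ∀ i, (e i • r • m) ⊗ₜ[k] (f i • x)
        = ∑ j, ψ (f j * (e i * r)) • ((e j • m) ⊗ₜ[k] (f i • x)) := by
      intro i
      rw [smul_smul]
      conv_lhs => rw [← hfrob₂ (e i * r)]
      rw [Finset.sum_smul, TensorProduct.sum_tmul]
      refine Finset.sum_congr rfl fun j _ => ?_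
      rw [smul_assoc, TensorProduct.smul_tmul']
    calc ∑ i, (e i • r • m) ⊗ₜ[k] (f i • x)
        = ∑ i, ∑ j, ψ (f j * (e i * r)) • ((e j • m) ⊗ₜ[k] (f i • x)) :=
          Finset.sum_congr rfl fun i _ => key i
      _ = ∑ j, ∑ i, ψ (f j * (e i * r)) • ((e j • m) ⊗ₜ[k] (f i • x)) :=
          Finset.sum_comm
      _ = ∑ j, (e j • m) ⊗ₜ[k] ((f j * r) • x) := by
          refine Finset.sum_congr rfl fun j _ => ?_
          have : ∀ i, ψ (f j * (e i * r)) • ((e j • m) ⊗ₜ[k] (f i • x))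
              = (e j • m) ⊗ₜ[k] ((ψ ((f j * r) * e i) • f i) • x) := by
            intro i
            rw [smul_assoc, ← TensorProduct.tmul_smul]
            ring_nf
          rw [Finset.sum_congr rfl fun i _ => this i, ← TensorProduct.tmul_sum]
          congr 1
          rw [← Finset.sum_smul]
          congr 1
          exact hfrob₁ (f j * r)
      _ = ∑ j, (e j • m) ⊗ₜ[k] (f j • r • x) := by
          refine Finset.sum_congr rfl fun j _ => ?_
          rw [mul_smul]
  let ι₀ : M ⊗[R] N →+ M ⊗[k] N := TensorProduct.liftAddHom b hbal
  have hι₀ : ∀ (m : M) (x : N), ι₀ (m ⊗ₜ[R] x) = ∑ i, (e i • m) ⊗ₜ[k] (f i • x) :=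
    fun m x => TensorProduct.liftAddHom_tmul b hbal m x
  let ι : M ⊗[R] N →ₗ[k] M ⊗[k] N :=
    { toFun := ι₀
      map_add' := ι₀.map_add
      map_smul' := by
        intro c z
        show ι₀ (c • z) = c • ι₀ z
        induction z using TensorProduct.induction_on with
        | zero => simp
        | tmul m x =>
            rw [TensorProduct.smul_tmul', hι₀, hι₀]
            simp only [Finset.smul_sum]
            refine Finset.sum_congr rfl fun i _ => ?_
            rw [smul_comm (e i) c m, TensorProduct.smul_tmul']
        | add z w hz hw =>
            rw [smul_add, map_add, hz, hw, map_add, smul_add] }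
  have hι : ∀ (m : M) (x : N), ι (m ⊗ₜ[R] x) = ∑ i, (e i • m) ⊗ₜ[k] (f i • x) := hι₀
  refine ⟨ι, hι, ?_, ?_⟩
  · apply LinearMap.ext
    intro z
    induction z using TensorProduct.induction_on with
    | zero => simp
    | tmul m x =>
        simp only [LinearMap.comp_apply, hι, map_sum, LinearMap.id_apply]
        have : ∀ i, canProj k R M N ((e i • m) ⊗ₜ[k] (f i • x))
            = m ⊗ₜ[R] ((e i * f i) • x) := by
          intro i
          show (e i • m) ⊗ₜ[R] (f i • x) = m ⊗ₜ[R] ((e i * f i) • x)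
          rw [TensorProduct.smul_tmul, smul_smul]
        rw [Finset.sum_congr rfl fun i _ => this i, ← TensorProduct.tmul_sum,
          ← Finset.sum_smul, hsep, one_smul]
    | add z w hz hw =>
        simp only [LinearMap.comp_apply, map_add] at hz hw ⊢
        rw [hz, hw]
  · intro ι' hι'
    apply LinearMap.ext
    intro z
    induction z using TensorProduct.induction_on with
    | zero => simp
    | tmul m x => rw [hι', hι]
    | add z w hz hw => simp only [map_add, hz, hw]
end
end

section
/- Let R be a commutative k-algebra with a separable Frobenius structure (ψ, (eᵢ, fᵢ)), and let A and B be associative unital R-algebras (hence k-algebras by restriction). Let Φ : A ⊗[R] B → B ⊗[R] A be an R-linear distributive law: Φ ∘ (μ_A ⊗ id_B) = (id_B ⊗ μ_A) ∘ (Φ ⊗ id_A) ∘ (id_A ⊗ Φ) over R, Φ ∘ (id_A ⊗ μ_B) = (μ_B ⊗ id_A) ∘ (id_B ⊗ Φ) ∘ (Φ ⊗ id_B) over R, Φ(1_A ⊗ b) = b ⊗ 1_A and Φ(a ⊗ 1_B) = 1_B ⊗ a for all a ∈ A, b ∈ B. Write π_{M,N} : M ⊗[k] N → M ⊗[R] N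 for the canonical projection and ι_{M,N} : M ⊗[R] N → M ⊗[k] N for the k-linear section determined by ι_{M,N}(m ⊗ n) = Σᵢ (eᵢ • m) ⊗ (fᵢ • n). Then Ψ := ι_{B,A} ∘ Φ ∘ π_{A,B} : A ⊗[k] B → B ⊗[k] A is a weak distributive law of A over B over k, and its associated idempotent satisfies Ψ̄ = ι_{B,A} ∘ π_{B,A}. Hence the weak wreath product of Ψ is isomorphic as a k-algebra to B ⊗[R] A with the multiplication induced by Φ. -/
open TensorProduct LinearMap

noncomputable section

section WeakDistrLaw

variable (k : Type*) [CommRing k]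
variable (A B : Type*) [Ring A] [Algebra k A] [Ring B] [Algebra k B]

/-- The composite `(id_B ⊗ μ_A) ∘ (Ψ ⊗ id_A)` (with associators inserted),
as a map `A ⊗ (B ⊗ A) → B ⊗ A`. -/
def wComp1 (Ψ : A ⊗[k] B →ₗ[k] B ⊗[k] A) :
    A ⊗[k] (B ⊗[k] A) →ₗ[k] B ⊗[k] A :=
  lTensor B (mul' k A) ∘ₗ (TensorProduct.assoc k B A A).toLinearMap ∘ₗ
    rTensor A Ψ ∘ₗ (TensorProduct.assoc k A B A).symm.toLinearMap

/-- The composite `(μ_B ⊗ id_A) ∘ (id_B ⊗ Ψ)` (with associators inserted),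
as a map `(B ⊗ A) ⊗ B → B ⊗ A`. -/
def wComp2 (Ψ : A ⊗[k] B →ₗ[k] B ⊗[k] A) :
    (B ⊗[k] A) ⊗[k] B →ₗ[k] B ⊗[k] A :=
  rTensor A (mul' k B) ∘ₗ (TensorProduct.assoc k B B A).symm.toLinearMap ∘ₗ
    lTensor B Ψ ∘ₗ (TensorProduct.assoc k B A B).toLinearMap

/-- Ψ is a weak distributive law of A over B. -/
def IsWeakDistrLaw (Ψ : A ⊗[k] B →ₗ[k] B ⊗[k] A) : Prop :=
  (∀ (a a' : A) (b : B),
      Ψ ((a * a') ⊗ₜ[k] b) = wComp1 k A B Ψ (a ⊗ₜ[k] Ψ (a' ⊗ₜ[k] b))) ∧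
  (∀ (a : A) (b b' : B),
      Ψ (a ⊗ₜ[k] (b * b')) = wComp2 k A B Ψ (Ψ (a ⊗ₜ[k] b) ⊗ₜ[k] b')) ∧
  (∀ (a : A) (b : B),
      rTensor A (mulLeft k b) (Ψ (a ⊗ₜ[k] (1 : B))) =
        lTensor B (mulRight k a) (Ψ ((1 : A) ⊗ₜ[k] b)))

/-- The multiplication `μ = (μ_B ⊗ μ_A) ∘ (id_B ⊗ Ψ ⊗ id_A)` on `B ⊗ A`. -/
def wMu (Ψ : A ⊗[k] B →ₗ[k] B ⊗[k] A) :
    (B ⊗[k] A) ⊗[k] (B ⊗[k] A) →ₗ[k] B ⊗[k] A :=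
  rTensor A (mul' k B) ∘ₗ (TensorProduct.assoc k B B A).symm.toLinearMap ∘ₗ
    lTensor B (wComp1 k A B Ψ) ∘ₗ (TensorProduct.assoc k B A (B ⊗[k] A)).toLinearMap

/-- The canonical idempotent `Ψ̄ : B ⊗ A → B ⊗ A`, `b ⊗ a ↦ μ((b ⊗ 1) ⊗ (1 ⊗ a))`. -/
def wPsiBar (Ψ : A ⊗[k] B →ₗ[k] B ⊗[k] A) : B ⊗[k] A →ₗ[k] B ⊗[k] A :=
  wMu k A B Ψ ∘ₗ
    TensorProduct.map ((TensorProduct.mk k B A).flip (1 : A)) (TensorProduct.mk k B A (1 : B))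

end WeakDistrLaw

section ProjAux

variable (k : Type*) [CommRing k] (R : Type*) [CommRing R] [Algebra k R]
variable (M N : Type*) [AddCommGroup M] [Module k M] [Module R M] [IsScalarTower k R M]
  [AddCommGroup N] [Module k N] [Module R N] [IsScalarTower k R N]

theorem canProj_tmul (m : M) (n : N) : canProj k R M N (m ⊗ₜ[k] n) = m ⊗ₜ[R] n := rfl

end ProjAux

section AuxLemmas

variable (k : Type*) [CommRing k]
variable (A B : Type*) [Ring A] [Algebra k A] [Ring B] [Algebra k B]

theorem lTensor_mul_assoc (z : B ⊗[k] A) (d : A) :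
    lTensor B (mul' k A) ((TensorProduct.assoc k B A A) (z ⊗ₜ[k] d)) =
      lTensor B (mulRight k d) z := by
  induction z using TensorProduct.induction_on with
  | zero =>
    rw [TensorProduct.zero_tmul, (TensorProduct.assoc k B A A).map_zero, map_zero, map_zero]
  | tmul u v => simp [mul'_apply]
  | add x y hx hy => simp only [TensorProduct.add_tmul, map_add, hx, hy]

theorem rTensor_mul_assoc (c : B) (z : B ⊗[k] A) :
    rTensor A (mul' k B) ((TensorProduct.assoc k B B A).symm (c ⊗ₜ[k] z)) =
      rTensor A (mulLeft k c) z := by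
  induction z using TensorProduct.induction_on with
  | zero =>
    rw [TensorProduct.tmul_zero, (TensorProduct.assoc k B B A).symm.map_zero, map_zero, map_zero]
  | tmul u v => simp [mul'_apply]
  | add x y hx hy => simp only [TensorProduct.tmul_add, map_add, hx, hy]

theorem wComp1_tmul (Ψ : A ⊗[k] B →ₗ[k] B ⊗[k] A) (a : A) (c : B) (d : A) :
    wComp1 k A B Ψ (a ⊗ₜ[k] (c ⊗ₜ[k] d)) = lTensor B (mulRight k d) (Ψ (a ⊗ₜ[k] c)) := by
  simp only [wComp1, coe_comp, Function.comp_apply, LinearEquiv.coe_coe,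
    TensorProduct.assoc_symm_tmul, rTensor_tmul]
  exact lTensor_mul_assoc k A B _ d

theorem wComp2_tmul (Ψ : A ⊗[k] B →ₗ[k] B ⊗[k] A) (c : B) (d : A) (b' : B) :
    wComp2 k A B Ψ ((c ⊗ₜ[k] d) ⊗ₜ[k] b') = rTensor A (mulLeft k c) (Ψ (d ⊗ₜ[k] b')) := by
  simp only [wComp2, coe_comp, Function.comp_apply, LinearEquiv.coe_coe,
    TensorProduct.assoc_tmul, lTensor_tmul]
  exact rTensor_mul_assoc k A B c _

theorem wMu_tmul (Ψ : A ⊗[k] B →ₗ[k] B ⊗[k] A) (c : B) (d : A) (z : B ⊗[k] A) :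
    wMu k A B Ψ ((c ⊗ₜ[k] d) ⊗ₜ[k] z) =
      rTensor A (mulLeft k c) (wComp1 k A B Ψ (d ⊗ₜ[k] z)) := by
  simp only [wMu, coe_comp, Function.comp_apply, LinearEquiv.coe_coe,
    TensorProduct.assoc_tmul, lTensor_tmul]
  exact rTensor_mul_assoc k A B c _

end AuxLemmas

/-- Let `R` be a commutative `k`-algebra with a separable Frobenius structure and
`Φ : A ⊗[R] B → B ⊗[R] A` an `R`-linear distributive law between `R`-algebras `A`, `B`.
Then `Ψ := ι_{B,A} ∘ Φ ∘ π_{A,B}` is a weak distributive law of `A` over `B` over `k`,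
its associated idempotent is `Ψ̄ = ι_{B,A} ∘ π_{B,A}`, and the weak wreath product of
`Ψ` is (isomorphic to) `B ⊗[R] A` with the multiplication induced by `Φ`. -/
theorem frobenius_distrLaw_to_weakDistrLaw
    (k : Type*) [CommRing k] (R : Type*) [CommRing R] [Algebra k R]
    (n : ℕ) (e f : Fin n → R) (ψ : R →ₗ[k] k)
    (hfrob₁ : ∀ r : R, ∑ i, ψ (r * e i) • f i = r)
    (hfrob₂ : ∀ r : R, ∑ i, ψ (f i * r) • e i = r)
    (hsep : ∑ i, e i * f i = 1)
    (A B : Type*) [Ring A] [Algebra R A] [Algebra k A] [IsScalarTower k R A]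
    [Ring B] [Algebra R B] [Algebra k B] [IsScalarTower k R B]
    (Φ : A ⊗[R] B →ₗ[R] B ⊗[R] A)
    (hΦ₁ : ∀ (a a' : A) (b : B),
      Φ ((a * a') ⊗ₜ[R] b) = wComp1 R A B Φ (a ⊗ₜ[R] Φ (a' ⊗ₜ[R] b)))
    (hΦ₂ : ∀ (a : A) (b b' : B),
      Φ (a ⊗ₜ[R] (b * b')) = wComp2 R A B Φ (Φ (a ⊗ₜ[R] b) ⊗ₜ[R] b'))
    (hΦu₁ : ∀ b : B, Φ ((1 : A) ⊗ₜ[R] b) = b ⊗ₜ[R] (1 : A))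
    (hΦu₂ : ∀ a : A, Φ (a ⊗ₜ[R] (1 : B)) = (1 : B) ⊗ₜ[R] a)
    (ιBA : B ⊗[R] A →ₗ[k] B ⊗[k] A)
    (hι : ∀ (b : B) (a : A), ιBA (b ⊗ₜ[R] a) = ∑ i, (e i • b) ⊗ₜ[k] (f i • a)) :
    IsWeakDistrLaw k A B (ιBA ∘ₗ Φ.restrictScalars k ∘ₗ canProj k R A B) ∧
    wPsiBar k A B (ιBA ∘ₗ Φ.restrictScalars k ∘ₗ canProj k R A B) =
      ιBA ∘ₗ canProj k R B A ∧
    (∀ x y : B ⊗[R] A,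
      canProj k R B A
          (wMu k A B (ιBA ∘ₗ Φ.restrictScalars k ∘ₗ canProj k R A B)
            (ιBA x ⊗ₜ[k] ιBA y)) =
        wMu R A B Φ (x ⊗ₜ[R] y)) := by
  set Ψ : A ⊗[k] B →ₗ[k] B ⊗[k] A := ιBA ∘ₗ Φ.restrictScalars k ∘ₗ canProj k R A B with hΨdef
  have hΨ : ∀ (a : A) (b : B), Ψ (a ⊗ₜ[k] b) = ιBA (Φ (a ⊗ₜ[R] b)) := fun a b => rfl
  -- π ∘ ι = id
  have hπι : ∀ x : B ⊗[R] A, canProj k R B A (ιBA x) = x := by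
    intro x
    induction x using TensorProduct.induction_on with
    | zero => simp
    | tmul b a =>
      rw [hι, map_sum]
      have h1 : ∀ i ∈ Finset.univ, canProj k R B A ((e i • b) ⊗ₜ[k] (f i • a)) =
          (e i * f i) • (b ⊗ₜ[R] a) := by
        intro i _
        rw [canProj_tmul, ← TensorProduct.smul_tmul', TensorProduct.tmul_smul, smul_smul]
      rw [Finset.sum_congr rfl h1, ← Finset.sum_smul, hsep, one_smul]
    | add x y hx hy => rw [map_add, map_add, hx, hy]
  have hsc1 : ∀ j : Fin n, (∑ i, f j * e i * f i) = f j := by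
    intro j
    have : ∀ i ∈ Finset.univ, f j * e i * f i = f j * (e i * f i) := fun i _ => mul_assoc _ _ _
    rw [Finset.sum_congr rfl this, ← Finset.mul_sum, hsep, mul_one]
  have hsc2 : ∀ j : Fin n, (∑ i, e i * (e j * f i)) = e j := by
    intro j
    have : ∀ i ∈ Finset.univ, e i * (e j * f i) = e j * (e i * f i) := fun i _ => by ring
    rw [Finset.sum_congr rfl this, ← Finset.mul_sum, hsep, mul_one]
  -- key identity for right multiplication
  have hK3 : ∀ (y : B ⊗[R] A) (a' : A),
      ∑ i, lTensor B (mulRight k (f i • a')) (ιBA (e i • y)) =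
        ιBA (lTensor B (mulRight R a') y) := by
    intro y a'
    induction y using TensorProduct.induction_on with
    | zero => simp
    | tmul c d =>
      have h1 : ∀ i, ιBA (e i • (c ⊗ₜ[R] d)) = ∑ j, (e j • c) ⊗ₜ[k] ((f j * e i) • d) := by
        intro i
        rw [← TensorProduct.tmul_smul, hι]
        exact Finset.sum_congr rfl fun j _ => by rw [smul_smul]
      calc ∑ i, lTensor B (mulRight k (f i • a')) (ιBA (e i • (c ⊗ₜ[R] d)))
          = ∑ i, ∑ j, (e j • c) ⊗ₜ[k] ((f j * e i * f i) • (d * a')) := by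
            refine Finset.sum_congr rfl fun i _ => ?_
            rw [h1, map_sum]
            refine Finset.sum_congr rfl fun j _ => ?_
            rw [lTensor_tmul, mulRight_apply, smul_mul_smul_comm]
        _ = ∑ j, (e j • c) ⊗ₜ[k] (f j • (d * a')) := by
            rw [Finset.sum_comm]
            refine Finset.sum_congr rfl fun j _ => ?_
            rw [← TensorProduct.tmul_sum, ← Finset.sum_smul, hsc1]
        _ = ιBA (lTensor B (mulRight R a') (c ⊗ₜ[R] d)) := by
            rw [lTensor_tmul, mulRight_apply, hι]
    | add x y hx hy => simp only [smul_add, map_add, Finset.sum_add_distrib, hx, hy]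
  -- key identity for left multiplication
  have hK4 : ∀ (y : B ⊗[R] A) (c : B),
      ∑ i, rTensor A (mulLeft k (e i • c)) (ιBA (f i • y)) =
        ιBA (rTensor A (mulLeft R c) y) := by
    intro y c
    induction y using TensorProduct.induction_on with
    | zero => simp
    | tmul u v =>
      have h1 : ∀ i, ιBA (f i • (u ⊗ₜ[R] v)) = ∑ j, ((e j * f i) • u) ⊗ₜ[k] (f j • v) := by
        intro i
        rw [TensorProduct.smul_tmul', hι]
        exact Finset.sum_congr rfl fun j _ => by rw [smul_smul]
      calc ∑ i, rTensor A (mulLeft k (e i • c)) (ιBA (f i • (u ⊗ₜ[R] v)))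
          = ∑ i, ∑ j, ((e i * (e j * f i)) • (c * u)) ⊗ₜ[k] (f j • v) := by
            refine Finset.sum_congr rfl fun i _ => ?_
            rw [h1, map_sum]
            refine Finset.sum_congr rfl fun j _ => ?_
            rw [rTensor_tmul, mulLeft_apply, smul_mul_smul_comm]
        _ = ∑ j, (e j • (c * u)) ⊗ₜ[k] (f j • v) := by
            rw [Finset.sum_comm]
            refine Finset.sum_congr rfl fun j _ => ?_
            rw [← TensorProduct.sum_tmul, ← Finset.sum_smul, hsc2]
        _ = ιBA (rTensor A (mulLeft R c) (u ⊗ₜ[R] v)) := by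
            rw [rTensor_tmul, mulLeft_apply, hι]
    | add x y hx hy => simp only [smul_add, map_add, Finset.sum_add_distrib, hx, hy]
  -- main compatibility for wComp1
  have hM1 : ∀ (a : A) (x : B ⊗[R] A),
      wComp1 k A B Ψ (a ⊗ₜ[k] ιBA x) = ιBA (wComp1 R A B Φ (a ⊗ₜ[R] x)) := by
    intro a x
    induction x using TensorProduct.induction_on with
    | zero => simp
    | tmul c d =>
      rw [hι, TensorProduct.tmul_sum, map_sum]
      have h1 : ∀ i ∈ Finset.univ, wComp1 k A B Ψ (a ⊗ₜ[k] ((e i • c) ⊗ₜ[k] (f i • d))) =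
          lTensor B (mulRight k (f i • d)) (ιBA (e i • Φ (a ⊗ₜ[R] c))) := by
        intro i _
        rw [wComp1_tmul, hΨ, TensorProduct.tmul_smul, map_smul]
      rw [Finset.sum_congr rfl h1, hK3, wComp1_tmul]
    | add x y hx hy => simp only [map_add, TensorProduct.tmul_add, hx, hy]
  -- main compatibility for wComp2
  have hM2 : ∀ (x : B ⊗[R] A) (b' : B),
      wComp2 k A B Ψ (ιBA x ⊗ₜ[k] b') = ιBA (wComp2 R A B Φ (x ⊗ₜ[R] b')) := by
    intro x b'
    induction x using TensorProduct.induction_on with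
    | zero => simp
    | tmul c d =>
      rw [hι, TensorProduct.sum_tmul, map_sum]
      have h1 : ∀ i ∈ Finset.univ,
          wComp2 k A B Ψ (((e i • c) ⊗ₜ[k] (f i • d)) ⊗ₜ[k] b') =
            rTensor A (mulLeft k (e i • c)) (ιBA (f i • Φ (d ⊗ₜ[R] b'))) := by
        intro i _
        rw [wComp2_tmul, hΨ, ← TensorProduct.smul_tmul', map_smul]
      rw [Finset.sum_congr rfl h1, hK4, wComp2_tmul]
    | add x y hx hy => simp only [map_add, TensorProduct.add_tmul, hx, hy]
  refine ⟨⟨?_, ?_, ?_⟩, ?_, ?_⟩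
  · -- law 1
    intro a a' b
    rw [hΨ (a * a') b, hΦ₁, ← hM1, ← hΨ a' b]
  · -- law 2
    intro a b b'
    rw [hΨ a (b * b'), hΦ₂, ← hM2, ← hΨ a b]
  · -- law 3 (weak unit condition)
    intro a b
    rw [hΨ a 1, hΨ 1 b, hΦu₂, hΦu₁, hι, hι, map_sum, map_sum]
    refine Finset.sum_congr rfl fun i _ => ?_
    rw [rTensor_tmul, lTensor_tmul, mulLeft_apply, mulRight_apply,
      mul_smul_comm, mul_one, smul_mul_assoc, one_mul]
  · -- the idempotent is ι ∘ π
    refine TensorProduct.ext' fun b a => ?_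
    have h0 : wPsiBar k A B Ψ (b ⊗ₜ[k] a) =
        wMu k A B Ψ ((b ⊗ₜ[k] (1 : A)) ⊗ₜ[k] ((1 : B) ⊗ₜ[k] a)) := by
      simp [wPsiBar]
    rw [h0, wMu_tmul, wComp1_tmul, hΨ, hΦu₂, hι, map_sum, map_sum,
      coe_comp, Function.comp_apply, canProj_tmul, hι]
    refine Finset.sum_congr rfl fun i _ => ?_
    rw [lTensor_tmul, rTensor_tmul, mulRight_apply, mulLeft_apply,
      smul_mul_assoc, one_mul, mul_smul_comm, mul_one]
  · -- compatibility of the multiplications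
    intro x y
    induction x using TensorProduct.induction_on with
    | zero => simp
    | tmul b a =>
      have h1 : ∀ i ∈ Finset.univ,
          wMu k A B Ψ (((e i • b) ⊗ₜ[k] (f i • a)) ⊗ₜ[k] ιBA y) =
            rTensor A (mulLeft k (e i • b)) (ιBA (f i • wComp1 R A B Φ (a ⊗ₜ[R] y))) := by
        intro i _
        rw [wMu_tmul, hM1, ← TensorProduct.smul_tmul', map_smul]
      rw [hι b a, TensorProduct.sum_tmul, map_sum, Finset.sum_congr rfl h1, hK4, hπι,
        ← wMu_tmul]
    | add u v hu hv =>
      simp only [map_add, TensorProduct.add_tmul, hu, hv]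
end
end

section
/- Let k be a field with characteristic different from 2, let T be the k-subalgebra of 2×2 matrices over k consisting of the upper triangular matrices (matrices M with M₁₀ = 0), and let G := k[ℤ₂] be the group algebra of the cyclic group of order 2, with group-like generator g satisfying g² = 1. Set a := [[1,1],[0,-1]] ∈ T and b := [[-1,0],[0,1]] ∈ T. Then: (i) there are unique unital k-algebra homomorphisms α, β : G → T with α(g) = a and β(g) = b; (ii) defining π : G ⊗[k] G → T by π(x ⊗ y) := β(x)·α(y), there exists a k-linear map ι : T → G ⊗[k] G with π ∘ ι = id_T and ι(β(x)·t·α(y)) = (L_x ⊗ R_y)(ι(t)) for all x, y ∈ G and t ∈ T, where L_x is left multiplication by x and R_y is right multiplication by y on G. Hence T admits a bilinear factorization in terms of two copies of k[ℤ₂]. -/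
set_option synthInstance.maxHeartbeats 1000000
set_option maxHeartbeats 1600000

open TensorProduct LinearMap

noncomputable section

/-- The algebra of `2 × 2` upper triangular matrices over `k`. -/
def UT (k : Type*) [CommRing k] : Subalgebra k (Matrix (Fin 2) (Fin 2) k) where
  carrier := {M | M 1 0 = 0}
  mul_mem' := by
    intro M N hM hN
    simp only [Set.mem_setOf_eq] at *
    rw [Matrix.mul_apply, Fin.sum_univ_two, hM, hN]
    ring
  one_mem' := by simp [Set.mem_setOf_eq, Matrix.one_apply]
  add_mem' := by
    intro M N hM hN
    simp only [Set.mem_setOf_eq, Matrix.add_apply] at *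
    rw [hM, hN, add_zero]
  zero_mem' := by simp [Set.mem_setOf_eq]
  algebraMap_mem' := by
    intro c
    simp [Set.mem_setOf_eq, Matrix.algebraMap_matrix_apply]

/-- The element `a = [[1,1],[0,-1]]` of `T`. -/
def matA (k : Type*) [CommRing k] : UT k :=
  ⟨!![1, 1; 0, -1], show (!![1, 1; 0, -1] : Matrix (Fin 2) (Fin 2) k) 1 0 = 0 by simp⟩

/-- The element `b = [[-1,0],[0,1]]` of `T`. -/
def matB (k : Type*) [CommRing k] : UT k :=
  ⟨!![-1, 0; 0, 1], show (!![-1, 0; 0, 1] : Matrix (Fin 2) (Fin 2) k) 1 0 = 0 by simp⟩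

/-- The group-like generator `g` of the group algebra `k[ℤ₂]`. -/
def genG (k : Type*) [CommRing k] : MonoidAlgebra k (Multiplicative (ZMod 2)) :=
  MonoidAlgebra.of k (Multiplicative (ZMod 2)) (Multiplicative.ofAdd 1)

namespace BFaux

variable (k : Type*) [Field k]

abbrev Gk := MonoidAlgebra k (Multiplicative (ZMod 2))

lemma g_mul_g : genG k * genG k = 1 := by
  rw [genG, ← map_mul]
  have h : (Multiplicative.ofAdd (1 : ZMod 2)) * Multiplicative.ofAdd 1 = 1 := by decide
  rw [h, map_one]

/-- Monoid hom to a commutative-ring-free algebra from an involution. -/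
def invMonoidHom {A : Type*} [Ring A] (u : A) (hu : u * u = 1) :
    Multiplicative (ZMod 2) →* A where
  toFun z := u ^ (z.toAdd.val)
  map_one' := by simp
  map_mul' x y := by
    have hpow : ∀ n : ℕ, u ^ (n % 2) = u ^ n := by
      intro n
      conv_rhs => rw [← Nat.div_add_mod n 2]
      rw [pow_add, pow_mul, show u ^ 2 = 1 by rw [sq, hu], one_pow, one_mul]
    show u ^ (Multiplicative.toAdd (x*y)).val = u ^ _ * u ^ _
    rw [toAdd_mul, ZMod.val_add, hpow, pow_add]

def homOfInv (u : UT k) (hu : u * u = 1) : Gk k →ₐ[k] UT k :=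
  MonoidAlgebra.lift k (UT k) (Multiplicative (ZMod 2)) (invMonoidHom u hu)

lemma homOfInv_genG (u : UT k) (hu : u * u = 1) : homOfInv k u hu (genG k) = u := by
  rw [homOfInv, genG, MonoidAlgebra.of_apply, MonoidAlgebra.lift_single, one_smul]
  show u ^ (Multiplicative.toAdd (Multiplicative.ofAdd (1 : ZMod 2))).val = u
  have : (Multiplicative.toAdd (Multiplicative.ofAdd (1 : ZMod 2))).val = 1 := by decide
  rw [this, pow_one]

lemma hom_ext {φ ψ : Gk k →ₐ[k] UT k} (h : φ (genG k) = ψ (genG k)) : φ = ψ := by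
  apply MonoidAlgebra.algHom_ext
  intro x
  have hx : ∀ z : Multiplicative (ZMod 2), z = Multiplicative.ofAdd 0 ∨ z = Multiplicative.ofAdd 1 := by decide
  rcases hx x with hx | hx
  · have : MonoidAlgebra.single x (1:k) = 1 := by
      rw [hx, MonoidAlgebra.one_def]; rfl
    rw [this, map_one, map_one]
  · have : MonoidAlgebra.single x (1:k) = genG k := by
      rw [hx, genG, MonoidAlgebra.of_apply]
    rw [this, h]
  exact Subsingleton.elim _ _

lemma matA_sq : matA k * matA k = 1 := by
  apply Subtype.ext
  show (!![1, 1; 0, -1] * !![1, 1; 0, -1] : Matrix (Fin 2) (Fin 2) k) = 1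
  rw [Matrix.mul_fin_two, Matrix.one_fin_two]
  norm_num

lemma matB_sq : matB k * matB k = 1 := by
  apply Subtype.ext
  show (!![-1, 0; 0, 1] * !![-1, 0; 0, 1] : Matrix (Fin 2) (Fin 2) k) = 1
  rw [Matrix.mul_fin_two, Matrix.one_fin_two]
  norm_num

end BFaux

namespace BFaux
variable (k : Type*) [Field k]

def pm : Gk k := (2⁻¹ : k) • (1 - genG k)
def pp : Gk k := (2⁻¹ : k) • (1 + genG k)

lemma g_mul_pm : genG k * pm k = - pm k := by
  rw [pm, mul_smul_comm, mul_sub, mul_one, g_mul_g, ← smul_neg, neg_sub]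

lemma g_mul_pp : genG k * pp k = pp k := by
  rw [pp, mul_smul_comm, mul_add, mul_one, g_mul_g, add_comm]

lemma pm_mul_g : pm k * genG k = - pm k := by rw [mul_comm, g_mul_pm]
lemma pp_mul_g : pp k * genG k = pp k := by rw [mul_comm, g_mul_pp]

lemma genG_eq (hchar : (2:k) ≠ 0) : genG k = 1 - (2:k) • pm k := by
  rw [pm, smul_smul, mul_inv_cancel₀ hchar, one_smul, sub_sub_cancel]

def v0 : Gk k ⊗[k] Gk k := pm k ⊗ₜ 1
def v1 : Gk k ⊗[k] Gk k := (-2 : k) • (pm k ⊗ₜ pm k)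
def v2 : Gk k ⊗[k] Gk k := pp k ⊗ₜ pm k

def ent (i j : Fin 2) : UT k →ₗ[k] k where
  toFun t := t.1 i j
  map_add' t s := rfl
  map_smul' c t := rfl

def iot : UT k →ₗ[k] Gk k ⊗[k] Gk k :=
  (ent k 0 0).smulRight (v0 k) + (ent k 0 1).smulRight (v1 k) + (ent k 1 1).smulRight (v2 k)

lemma iot_apply (t : UT k) :
    iot k t = t.1 0 0 • v0 k + t.1 0 1 • v1 k + t.1 1 1 • v2 k := rfl

end BFaux

namespace BFaux
variable (k : Type*) [Field k]

lemma iot_matB_mul (t : UT k) :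
    iot k (matB k * t) = TensorProduct.map (mulLeft k (genG k)) LinearMap.id (iot k t) := by
  have h10 : t.1 1 0 = 0 := t.2
  have e00 : ((matB k * t : UT k) : Matrix (Fin 2) (Fin 2) k) 0 0 = -(t.1 0 0) := by
    simp [matB, Matrix.mul_apply, Fin.sum_univ_two]
  have e01 : ((matB k * t : UT k) : Matrix (Fin 2) (Fin 2) k) 0 1 = -(t.1 0 1) := by
    simp [matB, Matrix.mul_apply, Fin.sum_univ_two]
  have e11 : ((matB k * t : UT k) : Matrix (Fin 2) (Fin 2) k) 1 1 = t.1 1 1 := by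
    simp [matB, Matrix.mul_apply, Fin.sum_univ_two]
  have m0 : TensorProduct.map (mulLeft k (genG k)) LinearMap.id (v0 k) = - v0 k := by
    simp [v0, g_mul_pm, neg_tmul]
  have m1 : TensorProduct.map (mulLeft k (genG k)) LinearMap.id (v1 k) = - v1 k := by
    simp only [v1, map_smul, TensorProduct.map_tmul, mulLeft_apply, LinearMap.id_apply,
      g_mul_pm, neg_tmul]
    module
  have m2 : TensorProduct.map (mulLeft k (genG k)) LinearMap.id (v2 k) = v2 k := by
    simp [v2, g_mul_pp]
  rw [iot_apply, iot_apply, e00, e01, e11, map_add, map_add, map_smul, map_smul, map_smul,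
    m0, m1, m2]
  module

lemma iot_mul_matA (hchar : (2:k) ≠ 0) (t : UT k) :
    iot k (t * matA k) = TensorProduct.map LinearMap.id (mulRight k (genG k)) (iot k t) := by
  have h10 : t.1 1 0 = 0 := t.2
  have e00 : ((t * matA k : UT k) : Matrix (Fin 2) (Fin 2) k) 0 0 = t.1 0 0 := by
    simp [matA, Matrix.mul_apply, Fin.sum_univ_two]
  have e01 : ((t * matA k : UT k) : Matrix (Fin 2) (Fin 2) k) 0 1 = t.1 0 0 - t.1 0 1 := by
    simp [matA, Matrix.mul_apply, Fin.sum_univ_two]; ring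
  have e11 : ((t * matA k : UT k) : Matrix (Fin 2) (Fin 2) k) 1 1 = -(t.1 1 1) := by
    simp [matA, Matrix.mul_apply, Fin.sum_univ_two, h10]
  have m0 : TensorProduct.map LinearMap.id (mulRight k (genG k)) (v0 k) = v0 k + v1 k := by
    rw [v0, TensorProduct.map_tmul, LinearMap.id_apply, mulRight_apply, one_mul,
      genG_eq k hchar, tmul_sub, tmul_smul, v1]
    module
  have m1 : TensorProduct.map LinearMap.id (mulRight k (genG k)) (v1 k) = - v1 k := by
    simp only [v1, map_smul, TensorProduct.map_tmul, mulRight_apply, LinearMap.id_apply,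
      pm_mul_g, tmul_neg]
    module
  have m2 : TensorProduct.map LinearMap.id (mulRight k (genG k)) (v2 k) = - v2 k := by
    simp [v2, pm_mul_g, tmul_neg]
  rw [iot_apply, iot_apply, e00, e01, e11, map_add, map_add, map_smul, map_smul, map_smul,
    m0, m1, m2]
  module

lemma mulLeft_dec (c d : k) (u v : Gk k) :
    mulLeft k (c • u + d • v) = c • mulLeft k u + d • mulLeft k v := by
  ext z
  simp [add_mul, smul_mul_assoc]

lemma mulRight_dec (c d : k) (u v : Gk k) :
    mulRight k (c • u + d • v) = c • mulRight k u + d • mulRight k v := by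
  ext z
  simp [mul_add, mul_smul_comm]

lemma decomp (x : Gk k) :
    ∃ c d : k, x = c • (1 : Gk k) + d • genG k := by
  have hz : ∀ z : Multiplicative (ZMod 2), z = 1 ∨ z = Multiplicative.ofAdd 1 := by decide
  induction x using MonoidAlgebra.induction_linear with
  | zero => exact ⟨0, 0, by simp⟩
  | add f g hf hg =>
    obtain ⟨c, d, rfl⟩ := hf
    obtain ⟨c', d', rfl⟩ := hg
    exact ⟨c + c', d + d', by module⟩
  | single a b =>
    rcases hz a with h | h <;> subst h
    · refine ⟨b, 0, ?_⟩
      rw [MonoidAlgebra.one_def]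
      simp [MonoidAlgebra.smul_single']
    · refine ⟨0, b, ?_⟩
      rw [genG, MonoidAlgebra.of_apply]
      simp [MonoidAlgebra.smul_single']

end BFaux

namespace BFaux
variable (k : Type*) [Field k]

def E00 : UT k := ⟨!![1,0;0,0], show (!![1,0;0,0] : Matrix (Fin 2) (Fin 2) k) 1 0 = 0 by simp⟩
def E01 : UT k := ⟨!![0,1;0,0], show (!![0,1;0,0] : Matrix (Fin 2) (Fin 2) k) 1 0 = 0 by simp⟩
def E11 : UT k := ⟨!![0,0;0,1], show (!![0,0;0,1] : Matrix (Fin 2) (Fin 2) k) 1 0 = 0 by simp⟩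
def AM : UT k := ⟨!![0,-(2⁻¹:k);0,1], show (!![0,-(2⁻¹:k);0,1] : Matrix (Fin 2) (Fin 2) k) 1 0 = 0 by simp⟩

lemma beta_pm (hchar : (2:k) ≠ 0) (β : Gk k →ₐ[k] UT k) (hβ : β (genG k) = matB k) :
    β (pm k) = E00 k := by
  rw [pm, map_smul, map_sub, map_one, hβ]
  apply Subtype.ext
  show (2⁻¹:k) • ((1 : UT k) - matB k).1 = _
  show (2⁻¹:k) • ((1 : Matrix (Fin 2) (Fin 2) k) - !![-1,0;0,1]) = !![1,0;0,0]
  ext i j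
  fin_cases i <;> fin_cases j <;>
    · simp [Matrix.one_apply]
      try field_simp
      try norm_num

lemma beta_pp (hchar : (2:k) ≠ 0) (β : Gk k →ₐ[k] UT k) (hβ : β (genG k) = matB k) :
    β (pp k) = E11 k := by
  rw [pp, map_smul, map_add, map_one, hβ]
  apply Subtype.ext
  show (2⁻¹:k) • ((1 : Matrix (Fin 2) (Fin 2) k) + !![-1,0;0,1]) = !![0,0;0,1]
  ext i j
  fin_cases i <;> fin_cases j <;>
    · simp [Matrix.one_apply]
      try field_simp
      try norm_num

lemma alpha_pm (hchar : (2:k) ≠ 0) (α : Gk k →ₐ[k] UT k) (hα : α (genG k) = matA k) :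
    α (pm k) = AM k := by
  rw [pm, map_smul, map_sub, map_one, hα]
  apply Subtype.ext
  show (2⁻¹:k) • ((1 : Matrix (Fin 2) (Fin 2) k) - !![1,1;0,-1]) = !![0,-(2⁻¹:k);0,1]
  ext i j
  fin_cases i <;> fin_cases j <;>
    · simp [Matrix.one_apply]
      try field_simp
      try norm_num

lemma prod1 (hchar : (2:k) ≠ 0) : (-2:k) • (E00 k * AM k) = E01 k := by
  apply Subtype.ext
  show (-2:k) • ((!![1,0;0,0] : Matrix (Fin 2) (Fin 2) k) * !![0,-(2⁻¹:k);0,1]) = !![0,1;0,0]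
  rw [Matrix.mul_fin_two]
  ext i j
  fin_cases i <;> fin_cases j <;>
    · simp
      try field_simp
      try norm_num

lemma prod2 : E11 k * AM k = E11 k := by
  apply Subtype.ext
  show (!![0,0;0,1] : Matrix (Fin 2) (Fin 2) k) * !![0,-(2⁻¹:k);0,1] = !![0,0;0,1]
  rw [Matrix.mul_fin_two]
  norm_num

lemma pi_iota (hchar : (2:k) ≠ 0) (α β : Gk k →ₐ[k] UT k)
    (hα : α (genG k) = matA k) (hβ : β (genG k) = matB k) :
    (mul' k (UT k) ∘ₗ TensorProduct.map β.toLinearMap α.toLinearMap) ∘ₗ iot k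
      = LinearMap.id := by
  have p0 : (mul' k (UT k)) (TensorProduct.map β.toLinearMap α.toLinearMap (v0 k)) = E00 k := by
    rw [v0, TensorProduct.map_tmul, mul'_apply, AlgHom.toLinearMap_apply,
      AlgHom.toLinearMap_apply, map_one, mul_one, beta_pm k hchar β hβ]
  have p1 : (mul' k (UT k)) (TensorProduct.map β.toLinearMap α.toLinearMap (v1 k)) = E01 k := by
    rw [v1, map_smul, map_smul, TensorProduct.map_tmul, mul'_apply, AlgHom.toLinearMap_apply,
      AlgHom.toLinearMap_apply, beta_pm k hchar β hβ, alpha_pm k hchar α hα, prod1 k hchar]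
  have p2 : (mul' k (UT k)) (TensorProduct.map β.toLinearMap α.toLinearMap (v2 k)) = E11 k := by
    rw [v2, TensorProduct.map_tmul, mul'_apply, AlgHom.toLinearMap_apply,
      AlgHom.toLinearMap_apply, beta_pp k hchar β hβ, alpha_pm k hchar α hα, prod2 k]
  apply LinearMap.ext
  intro t
  rw [comp_apply, comp_apply, iot_apply]
  simp only [map_add, map_smul]
  rw [p0, p1, p2, id_apply]
  have h10 : t.1 1 0 = 0 := t.2
  apply Subtype.ext
  show t.1 0 0 • (E00 k).1 + t.1 0 1 • (E01 k).1 + t.1 1 1 • (E11 k).1 = t.1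
  ext i j
  fin_cases i <;> fin_cases j <;>
    simp [E00, E01, E11, h10]

end BFaux

/-- Over a field `k` of characteristic `≠ 2`, the three dimensional algebra `T` of
`2 × 2` upper triangular matrices admits a bilinear factorization in terms of two
copies of `k[ℤ₂]`: there are unique unital algebra homomorphisms
`α, β : k[ℤ₂] → T` with `α(g) = a`, `β(g) = b`, and the `B`-`A` bimodule map
`π : k[ℤ₂] ⊗ k[ℤ₂] → T`, `x ⊗ y ↦ β(x)·α(y)` has a `B`-`A` bilinear section `ι`. -/
theorem upper_triangular_bilinear_factorization
    (k : Type*) [Field k] (hchar : (2 : k) ≠ 0) :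
    (∃! α : MonoidAlgebra k (Multiplicative (ZMod 2)) →ₐ[k] UT k,
      α (genG k) = matA k) ∧
    (∃! β : MonoidAlgebra k (Multiplicative (ZMod 2)) →ₐ[k] UT k,
      β (genG k) = matB k) ∧
    (∀ (α β : MonoidAlgebra k (Multiplicative (ZMod 2)) →ₐ[k] UT k),
      α (genG k) = matA k → β (genG k) = matB k →
      ∃ ι : UT k →ₗ[k]
          MonoidAlgebra k (Multiplicative (ZMod 2)) ⊗[k]
            MonoidAlgebra k (Multiplicative (ZMod 2)),
        (mul' k (UT k) ∘ₗ TensorProduct.map β.toLinearMap α.toLinearMap) ∘ₗ ι =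
          LinearMap.id ∧
        ∀ (x y : MonoidAlgebra k (Multiplicative (ZMod 2))) (t : UT k),
          ι (β x * t * α y) =
            TensorProduct.map (mulLeft k x) (mulRight k y) (ι t)) := by
  refine ⟨⟨BFaux.homOfInv k (matA k) (BFaux.matA_sq k), BFaux.homOfInv_genG k _ _, ?_⟩,
    ⟨BFaux.homOfInv k (matB k) (BFaux.matB_sq k), BFaux.homOfInv_genG k _ _, ?_⟩, ?_⟩
  · intro φ hφ
    exact BFaux.hom_ext k (hφ.trans (BFaux.homOfInv_genG k _ _).symm)
  · intro φ hφ
    exact BFaux.hom_ext k (hφ.trans (BFaux.homOfInv_genG k _ _).symm)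
  · intro α β hα hβ
    refine ⟨BFaux.iot k, BFaux.pi_iota k hchar α β hα hβ, ?_⟩
    have P : ∀ (x : MonoidAlgebra k (Multiplicative (ZMod 2))) (t : UT k),
        BFaux.iot k (β x * t) =
        TensorProduct.map (mulLeft k x) LinearMap.id (BFaux.iot k t) := by
      intro x t
      obtain ⟨c, d, rfl⟩ := BFaux.decomp k x
      rw [map_add, map_smul, map_smul, map_one, hβ, add_mul, smul_mul_assoc, smul_mul_assoc,
        one_mul]
      rw [map_add, map_smul, map_smul, BFaux.iot_matB_mul]
      rw [BFaux.mulLeft_dec, TensorProduct.map_add_left, TensorProduct.map_smul_left,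
        TensorProduct.map_smul_left, mulLeft_one, TensorProduct.map_id]
      simp
    have Q : ∀ (y : MonoidAlgebra k (Multiplicative (ZMod 2))) (t : UT k),
        BFaux.iot k (t * α y) =
        TensorProduct.map LinearMap.id (mulRight k y) (BFaux.iot k t) := by
      intro y t
      obtain ⟨c, d, rfl⟩ := BFaux.decomp k y
      rw [map_add, map_smul, map_smul, map_one, hα, mul_add, mul_smul_comm, mul_smul_comm,
        mul_one]
      rw [map_add, map_smul, map_smul, BFaux.iot_mul_matA k hchar]
      rw [BFaux.mulRight_dec, TensorProduct.map_add_right, TensorProduct.map_smul_right,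
        TensorProduct.map_smul_right, mulRight_one, TensorProduct.map_id]
      simp
    intro x y t
    have hcomp : TensorProduct.map (mulLeft k x) LinearMap.id ∘ₗ
        TensorProduct.map LinearMap.id (mulRight k y)
        = TensorProduct.map (mulLeft k x) (mulRight k y) := by
      rw [← TensorProduct.map_comp, comp_id, id_comp]
    rw [mul_assoc, P x (t * α y), Q y t, ← hcomp, comp_apply]
end
end
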